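/- arXiv:1410.8110 — 3 statements merged into one kernel-verified Lean document; each statement's English description precedes it below -/
import Mathlib

section
/- Let M be a 4-dimensional vector space over the field with 2 elements, equipped with a nondegenerate alternating bilinear form. Then M has exactly 15 maximal isotropic (Lagrangian) subspaces, i.e., exactly 15 two-dimensional subspaces on which the form vanishes identically. -/
/-- A 4-dimensional vector space over `𝔽₂` with a nondegenerate alternating
bilinear form has exactly 15 maximal isotropic (Lagrangian) subspaces, i.e.
exactly 15 two-dimensional subspaces on which the form vanishes identically. -/
theorem stmt_3 (M : Type*) [AddCommGroup M] [Module (ZMod 2) M]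
    (hdim : Module.finrank (ZMod 2) M = 4)
    (B : M →ₗ[ZMod 2] M →ₗ[ZMod 2] ZMod 2)
    (halt : ∀ x, B x x = 0)
    (hnd : Function.Bijective fun x => B.flip x) :
    Nat.card {N : Submodule (ZMod 2) M |
      Module.finrank (ZMod 2) N = 2 ∧ ∀ x ∈ N, ∀ y ∈ N, B x y = 0} = 15 := by
  classical
  haveI : Module.Finite (ZMod 2) M := Module.finite_of_finrank_pos (by rw [hdim]; norm_num)
  haveI : Finite M := Module.finite_of_finite (ZMod 2)
  haveI := Fintype.ofFinite M
  -- symmetry of B in characteristic two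
  have hsym : ∀ x y, B x y = B y x := by
    intro x y
    have h := halt (x + y)
    simp only [map_add, LinearMap.add_apply, halt, zero_add, add_zero] at h
    have h2 := eq_neg_of_add_eq_zero_left h
    rw [CharTwo.neg_eq] at h2
    exact h2.symm
  -- nondegeneracy: B x ≠ 0 for x ≠ 0
  have hBx : ∀ x : M, x ≠ 0 → B x ≠ 0 := by
    intro x hx hc
    apply hx
    apply hnd.injective
    show B.flip x = B.flip 0
    ext y
    simp only [LinearMap.flip_apply, map_zero, LinearMap.zero_apply]
    rw [← hsym, hc]
    rfl
  -- cardinality of M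
  have hcardM : Fintype.card M = 16 := by
    have := Module.card_eq_pow_finrank (K := ZMod 2) (V := M)
    rw [hdim, ZMod.card] at this
    norm_num at this
    exact this
  -- cardinality of a submodule of finrank k
  have hcardN : ∀ (N : Submodule (ZMod 2) M),
      Fintype.card N = 2 ^ Module.finrank (ZMod 2) N := by
    intro N
    have := Module.card_eq_pow_finrank (K := ZMod 2) (V := N)
    rwa [ZMod.card] at this
  -- kernel of B x has 8 elements for x ≠ 0
  have hker : ∀ x : M, x ≠ 0 → Fintype.card (LinearMap.ker (B x)) = 8 := by
    intro x hx
    have hrk : Module.finrank (ZMod 2) (LinearMap.range (B x)) = 1 := by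
      have hle : Module.finrank (ZMod 2) (LinearMap.range (B x)) ≤ 1 := by
        have h1 := Submodule.finrank_le (LinearMap.range (B x))
        simpa using h1
      have hne : LinearMap.range (B x) ≠ ⊥ := by
        intro hc
        exact hBx x hx (LinearMap.range_eq_bot.mp hc)
      have hpos : 0 < Module.finrank (ZMod 2) (LinearMap.range (B x)) := by
        rw [Module.finrank_pos_iff_exists_ne_zero]
        obtain ⟨v, hv⟩ : ∃ v, B x v ≠ 0 := by
          by_contra hc
          push_neg at hc
          exact hBx x hx (by ext y; simp [hc])
        exact ⟨⟨B x v, LinearMap.mem_range_self _ v⟩, by simpa using hv⟩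
      omega
    have hnull : Module.finrank (ZMod 2) (LinearMap.ker (B x)) = 3 := by
      have := LinearMap.finrank_range_add_finrank_ker (B x)
      rw [hdim, hrk] at this
      omega
    rw [hcardN, hnull]
    norm_num
  -- the predicate on pairs
  set P : M × M → Prop := fun p => p.1 ≠ 0 ∧ p.2 ≠ 0 ∧ p.1 ≠ p.2 ∧ B p.1 p.2 = 0 with hP
  -- spans of such pairs are Lagrangian
  have hspan : ∀ p : M × M, P p →
      Module.finrank (ZMod 2) (Submodule.span (ZMod 2) {p.1, p.2}) = 2 ∧
      ∀ x ∈ Submodule.span (ZMod 2) {p.1, p.2}, ∀ y ∈ Submodule.span (ZMod 2) {p.1, p.2},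
        B x y = 0 := by
    rintro ⟨x, y⟩ ⟨hx, hy, hxy, hB⟩
    have hli : LinearIndependent (ZMod 2) ![x, y] := by
      rw [LinearIndependent.pair_iff' hx]
      intro a
      fin_cases a
      · exact fun h => hy (by rw [← h]; exact zero_smul _ _)
      · exact fun h => hxy (by rw [← h]; exact (one_smul _ _).symm)
    constructor
    · have h1 := finrank_span_eq_card hli
      have h2 : Set.range ![x, y] = {x, y} := by
        ext z; simp [Matrix.range_cons, Matrix.range_empty, or_comm]
      rw [h2] at h1
      simpa using h1
    · intro u hu v hv
      rw [Submodule.mem_span_pair] at hu hv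
      obtain ⟨a, b, rfl⟩ := hu
      obtain ⟨c, d, rfl⟩ := hv
      have hB' : B y x = 0 := by rw [← hsym]; exact hB
      simp [map_add, map_smul, LinearMap.add_apply, LinearMap.smul_apply, halt, hB, hB']
  set L := {N : Submodule (ZMod 2) M |
      Module.finrank (ZMod 2) N = 2 ∧ ∀ x ∈ N, ∀ y ∈ N, B x y = 0} with hL
  haveI : Finite (Submodule (ZMod 2) M) :=
    Finite.of_injective (fun N : Submodule (ZMod 2) M => (N : Set M)) SetLike.coe_injective
  -- the key membership characterization
  have key : ∀ p : M × M, P p → ∀ N : Submodule (ZMod 2) M, N ∈ L →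
      (Submodule.span (ZMod 2) {p.1, p.2} = N ↔ p.1 ∈ N ∧ p.2 ∈ N) := by
    rintro p hp N ⟨hN2, hNiso⟩
    constructor
    · rintro rfl
      exact ⟨Submodule.subset_span (by simp), Submodule.subset_span (by simp)⟩
    · rintro ⟨h1, h2⟩
      apply Submodule.eq_of_le_of_finrank_eq
      · rw [Submodule.span_le]
        rintro z (rfl | rfl) <;> simpa
      · rw [(hspan p hp).1, hN2]
  -- the map from pairs to Lagrangians
  set φ : {p : M × M // P p} → {N : Submodule (ZMod 2) M // N ∈ L} :=
    fun p => ⟨Submodule.span (ZMod 2) {p.1.1, p.1.2}, (hspan p.1 p.2).1, (hspan p.1 p.2).2⟩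
    with hφ
  -- each fiber has exactly 6 elements
  have hfiber : ∀ N0 : {N : Submodule (ZMod 2) M // N ∈ L},
      Fintype.card {p : {p : M × M // P p} // φ p = N0} = 6 := by
    rintro ⟨N, hN⟩
    have e : {p : {p : M × M // P p} // φ p = ⟨N, hN⟩} ≃
        {p : M × M // P p ∧ Submodule.span (ZMod 2) {p.1, p.2} = N} :=
      { toFun := fun t => ⟨t.1.1, t.1.2, congrArg Subtype.val t.2⟩
        invFun := fun p => ⟨⟨p.1, p.2.1⟩, Subtype.ext p.2.2⟩
        left_inv := fun t => rfl
        right_inv := fun p => rfl }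
    have e2 : {p : M × M // P p ∧ Submodule.span (ZMod 2) {p.1, p.2} = N} ≃
        {p : M × M // (p.1 ∈ N ∧ p.1 ≠ 0) ∧ (p.2 ∈ N ∧ p.2 ≠ 0) ∧ p.1 ≠ p.2} := by
      apply Equiv.subtypeEquivRight
      intro p
      constructor
      · rintro ⟨hp, hsp⟩
        have := (key p hp N hN).mp hsp
        exact ⟨⟨this.1, hp.1⟩, ⟨this.2, hp.2.1⟩, hp.2.2.1⟩
      · rintro ⟨⟨m1, z1⟩, ⟨m2, z2⟩, hne⟩
        have hp : P p := ⟨z1, z2, hne, hN.2 p.1 m1 p.2 m2⟩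
        exact ⟨hp, (key p hp N hN).mpr ⟨m1, m2⟩⟩
    rw [Fintype.card_congr (e.trans e2), Fintype.card_subtype]
    have hsc : ((Finset.univ.filter (fun a : M => a ∈ N)).erase 0).card = 3 := by
      have h4 : (Finset.univ.filter (fun a : M => a ∈ N)).card = 4 := by
        have := Fintype.card_subtype (p := fun a : M => a ∈ N)
        rw [hcardN N, hN.1] at this
        omega
      rw [Finset.card_erase_of_mem (by simp [N.zero_mem]), h4]
    have hfe : Finset.univ.filter
        (fun p : M × M => (p.1 ∈ N ∧ p.1 ≠ 0) ∧ (p.2 ∈ N ∧ p.2 ≠ 0) ∧ p.1 ≠ p.2) =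
        ((Finset.univ.filter (fun a : M => a ∈ N)).erase 0).offDiag := by
      ext p
      simp [Finset.mem_offDiag, Finset.mem_erase]
      tauto
    rw [hfe, Finset.offDiag_card, hsc]
  -- total number of good pairs is 90
  have hT : Fintype.card {p : M × M // P p} = 90 := by
    have es : {p : M × M // P p} ≃ Σ x : M, {y : M // P (x, y)} :=
      { toFun := fun p => ⟨p.1.1, p.1.2, p.2⟩
        invFun := fun s => ⟨(s.1, s.2.1), s.2.2⟩
        left_inv := fun p => rfl
        right_inv := fun s => rfl }
    rw [Fintype.card_congr es, Fintype.card_sigma]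
    have hx0 : ∀ x : M, Fintype.card {y : M // P (x, y)} = if x = 0 then 0 else 6 := by
      intro x
      by_cases hx : x = 0
      · simp only [hx, if_pos]
        refine Fintype.card_eq_zero_iff.mpr ⟨fun y => y.2.1 rfl⟩
      · rw [if_neg hx, Fintype.card_subtype]
        have hfe : Finset.univ.filter (fun y : M => P (x, y)) =
            ((Finset.univ.filter (fun y : M => B x y = 0)).erase 0).erase x := by
          ext y
          simp [hP, Finset.mem_erase, hx]
          tauto
        have hkc : (Finset.univ.filter (fun y : M => B x y = 0)).card = 8 := by
          have h1 := Fintype.card_subtype (p := fun y : M => y ∈ LinearMap.ker (B x))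
          rw [hker x hx] at h1
          have h2 : Finset.univ.filter (fun y : M => B x y = 0) =
              Finset.univ.filter (fun y : M => y ∈ LinearMap.ker (B x)) := by
            apply Finset.filter_congr
            intro y _
            simp [LinearMap.mem_ker]
          rw [h2]
          omega
        have hmem2 : (0 : M) ∈ Finset.univ.filter (fun y : M => B x y = 0) := by simp
        have hmem1 : x ∈ (Finset.univ.filter (fun y : M => B x y = 0)).erase 0 :=
          Finset.mem_erase.mpr ⟨hx, by simp [halt]⟩
        rw [hfe, Finset.card_erase_of_mem hmem1, Finset.card_erase_of_mem hmem2, hkc]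
    rw [Finset.sum_congr rfl (fun x _ => hx0 x), Finset.sum_ite, Finset.sum_const,
      Finset.sum_const]
    have h15 : (Finset.univ.filter (fun x : M => ¬x = 0)).card = 15 := by
      rw [Finset.filter_not, Finset.card_sdiff_of_subset (Finset.filter_subset _ _)]
      have h1 : (Finset.univ.filter (fun x : M => x = 0)).card = 1 := by
        apply Finset.card_eq_one.mpr
        exact ⟨0, by ext a; simp⟩
      rw [Finset.card_univ, hcardM, h1]
    rw [h15]
    simp
  -- put everything together
  have etot := Fintype.card_congr (Equiv.sigmaFiberEquiv φ).symm
  rw [hT, Fintype.card_sigma, Finset.sum_congr rfl (fun N0 _ => hfiber N0),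
    Finset.sum_const, smul_eq_mul] at etot
  have hLcard : Fintype.card {N : Submodule (ZMod 2) M // N ∈ L} = 15 := by
    have := Finset.card_univ (α := {N : Submodule (ZMod 2) M // N ∈ L})
    omega
  rw [Nat.card_eq_fintype_card]
  exact hLcard
end

section
/- Let N be a maximal isotropic subgroup of (ℤ/2ⁿℤ)⁴ with respect to a nondegenerate alternating ℤ/2ⁿℤ-bilinear pairing, where n ≥ 1. Then the rank of N (the F₂-dimension of N ⊗ F₂) is at least 2, and if N does not contain the full 2-torsion subgroup, its rank is 2 or 3. -/
private lemma two_pow_order (n : ℕ) {V : Type*} [AddCommGroup V] [Module (ZMod (2^n)) V]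
    (x : V) : ∃ m, m ≤ n ∧ addOrderOf x = 2 ^ m := by
  have h1 : (2^n : ℕ) • x = 0 := by
    rw [← Nat.cast_smul_eq_nsmul (ZMod (2^n)), ZMod.natCast_self, zero_smul]
  obtain ⟨m, hm, hx⟩ := (Nat.dvd_prime_pow Nat.prime_two).mp
    (addOrderOf_dvd_of_nsmul_eq_zero h1)
  exact ⟨m, hm, hx⟩

private lemma exists_gen (n : ℕ) {V : Type*} [AddCommGroup V] [Module (ZMod (2^n)) V] [Finite V]
    (h2 : Nat.card {x : V // x + x = 0} ≤ 2) :
    ∃ g : V, ∀ x : V, ∃ c : ZMod (2^n), x = c • g := by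
  classical
  obtain ⟨g, hg⟩ := Finite.exists_max (fun x : V => addOrderOf x)
  refine ⟨g, ?_⟩
  obtain ⟨k, hkn, hk⟩ := two_pow_order n g
  suffices H : ∀ M : ℕ, ∀ x : V, addOrderOf x ≤ M → ∃ c : ZMod (2^n), x = c • g by
    exact fun x => H (addOrderOf x) x le_rfl
  intro M
  induction M with
  | zero => exact fun x hx => absurd (addOrderOf_pos x) (by omega)
  | succ M ih =>
    intro x hx
    obtain ⟨m, hmn, hm⟩ := two_pow_order n x
    by_cases hx0 : x = 0
    · exact ⟨0, by simp [hx0]⟩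
    have hm1 : 1 ≤ m := by
      by_contra h
      have hm0 : m = 0 := by omega
      rw [hm0, pow_zero] at hm
      exact hx0 (AddMonoid.addOrderOf_eq_one_iff.mp hm)
    have hmk : m ≤ k := by
      have h' := hg x
      rw [hm, hk] at h'
      exact (Nat.pow_le_pow_iff_right (by norm_num)).mp h'
    have hk1 : 1 ≤ k := le_trans hm1 hmk
    -- the order of 2 • x is 2^(m-1)
    have h2x : addOrderOf ((2:ℕ) • x) = 2 ^ (m-1) := by
      rw [addOrderOf_nsmul' x (by norm_num), hm]
      have hgcd : Nat.gcd (2^m) 2 = 2 := Nat.gcd_eq_right (dvd_pow_self 2 (by omega))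
      rw [hgcd, show (2:ℕ)^m = 2^(m-1) * 2 by rw [← pow_succ]; congr 1; omega,
        Nat.mul_div_cancel _ (by norm_num)]
    obtain ⟨c, hc⟩ := ih ((2:ℕ) • x) (by
      rw [h2x]
      have ha : 2 ^ (m-1) < 2 ^ m := Nat.pow_lt_pow_right (by norm_num) (by omega)
      have hb : 2 ^ m ≤ M + 1 := hm ▸ hx
      omega)
    have hc' : (2 : ZMod (2^n)) • x = c • g := by
      rw [show ((2 : ZMod (2^n))) = ((2:ℕ) : ZMod (2^n)) by push_cast; ring,
        Nat.cast_smul_eq_nsmul]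
      exact hc
    haveI : NeZero (2^n) := ⟨pow_ne_zero n (by norm_num)⟩
    -- c must be even
    have hceven : ∃ c' : ZMod (2^n), c = 2 * c' := by
      by_cases hpar : c.val % 2 = 0
      · refine ⟨((c.val / 2 : ℕ) : ZMod (2^n)), ?_⟩
        conv_lhs => rw [← ZMod.cast_id _ c, ← ZMod.natCast_val]
        rw [show (2 : ZMod (2^n)) = ((2:ℕ) : ZMod (2^n)) by push_cast; ring, ← Nat.cast_mul]
        congr 1
        omega
      · exfalso
        have hunit : IsUnit c := by
          rw [← ZMod.cast_id _ c, ← ZMod.natCast_val, ZMod.isUnit_iff_coprime]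
          have hcop : Nat.Coprime c.val 2 := by
            rcases (Nat.dvd_prime Nat.prime_two).mp (Nat.gcd_dvd_right c.val 2) with h | h
            · exact h
            · exfalso
              have h2 := Nat.gcd_dvd_left c.val 2
              rw [h] at h2
              omega
          exact hcop.pow_right n
        obtain ⟨u, rfl⟩ := hunit
        have hxk : ((2:ZMod (2^n))^k) • x = 0 := by
          rw [show ((2:ZMod (2^n))^k) = ((2^k:ℕ) : ZMod (2^n)) by push_cast; ring,
            Nat.cast_smul_eq_nsmul]
          exact addOrderOf_dvd_iff_nsmul_eq_zero.mp (by rw [hm]; exact pow_dvd_pow 2 hmk)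
        have hzero : ((u:ZMod (2^n)) * 2^(k-1)) • g = 0 := by
          have hh : ((2:ZMod (2^n))^(k-1)) • ((2:ZMod (2^n)) • x) = 0 := by
            rw [smul_smul, ← pow_succ, show k - 1 + 1 = k by omega]
            exact hxk
          rw [hc', smul_smul, mul_comm] at hh
          exact hh
        have hg0 : ((2:ZMod (2^n))^(k-1)) • g = 0 := by
          have hh := congrArg (fun y => ((u⁻¹ : (ZMod (2^n))ˣ) : ZMod (2^n)) • y) hzero
          simpa [smul_smul, ← mul_assoc, Units.inv_mul] using hh
        have hdvd : addOrderOf g ∣ 2^(k-1) := by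
          apply addOrderOf_dvd_of_nsmul_eq_zero
          rw [← Nat.cast_smul_eq_nsmul (ZMod (2^n)),
            show ((2^(k-1):ℕ) : ZMod (2^n)) = ((2:ZMod (2^n))^(k-1)) by push_cast; ring]
          exact hg0
        rw [hk] at hdvd
        have hle := Nat.le_of_dvd (by positivity) hdvd
        have hlt : 2^(k-1) < 2^k := Nat.pow_lt_pow_right (by norm_num) (by omega)
        omega
    obtain ⟨c', rfl⟩ := hceven
    -- z := x - c' • g is 2-torsion
    set z : V := x - c' • g with hzdef
    have h2z : (2 : ZMod (2^n)) • z = 0 := by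
      rw [hzdef, smul_sub, hc', smul_smul, sub_self]
    have hzz : z + z = 0 := by rw [← two_smul (ZMod (2^n)) z]; exact h2z
    -- w := 2^(k-1) • g is a nonzero 2-torsion element
    set w : V := (2^(k-1) : ℕ) • g with hwdef
    have hww : w + w = 0 := by
      rw [← two_smul ℕ w, hwdef, smul_smul, show 2 * 2^(k-1) = 2^k by
        rw [← pow_succ']; congr 1; omega]
      exact addOrderOf_dvd_iff_nsmul_eq_zero.mp (by rw [hk])
    have hw0 : w ≠ 0 := by
      intro h
      have hdvd : addOrderOf g ∣ 2^(k-1) := addOrderOf_dvd_of_nsmul_eq_zero h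
      rw [hk] at hdvd
      have hle := Nat.le_of_dvd (by positivity) hdvd
      have hlt : 2^(k-1) < 2^k := Nat.pow_lt_pow_right (by norm_num) (by omega)
      omega
    -- z must be 0 or w
    have hzcase : z = 0 ∨ z = w := by
      by_contra hcon
      push_neg at hcon
      haveI : Fintype {y : V // y + y = 0} := Fintype.ofFinite _
      have h3 : ({⟨0, by simp⟩, ⟨w, hww⟩, ⟨z, hzz⟩} : Finset {y : V // y + y = 0}).card = 3 := by
        rw [Finset.card_insert_of_notMem (by
          simp only [Finset.mem_insert, Finset.mem_singleton]
          push_neg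
          constructor
          · exact fun h => hw0 (congrArg Subtype.val h).symm
          · exact fun h => hcon.1 (congrArg Subtype.val h).symm),
          Finset.card_insert_of_notMem (by
          simp only [Finset.mem_singleton]
          exact fun h => hcon.2 (congrArg Subtype.val h).symm),
          Finset.card_singleton]
      have hle : ({⟨0, by simp⟩, ⟨w, hww⟩, ⟨z, hzz⟩} : Finset {y : V // y + y = 0}).card
          ≤ Nat.card {y : V // y + y = 0} := by
        rw [Nat.card_eq_fintype_card]
        exact Finset.card_le_univ _
      omega
    rcases hzcase with h | h
    · exact ⟨c', by rw [← sub_eq_zero]; exact h⟩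
    · refine ⟨c' + ((2^(k-1):ℕ) : ZMod (2^n)), ?_⟩
      rw [add_smul, Nat.cast_smul_eq_nsmul]
      have hxw : x - c' • g = (2^(k-1) : ℕ) • g := h
      rw [← hxw]
      abel



/-- The rank of a finite abelian 2-group (the `𝔽₂`-dimension of `G ⊗ 𝔽₂`),
computed as `log₂` of the cardinality of the 2-torsion subgroup. -/
noncomputable def twoRank (G : Type*) [AddCommGroup G] : ℕ :=
  Nat.log 2 (Nat.card {x : G // x + x = 0})

/-- Let `N` be a maximal isotropic subgroup of `(ℤ/2ⁿℤ)⁴` (n ≥ 1) for a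
nondegenerate alternating pairing.  Then the rank of `N` is at least 2, and if
`N` does not contain the full 2-torsion subgroup, its rank is 2 or 3. -/
theorem stmt_9 (n : ℕ) (hn : 1 ≤ n)
    (B : (Fin 4 → ZMod (2 ^ n)) →ₗ[ZMod (2 ^ n)] (Fin 4 → ZMod (2 ^ n))
      →ₗ[ZMod (2 ^ n)] ZMod (2 ^ n))
    (halt : ∀ x, B x x = 0)
    (hnd : Function.Bijective fun x => B.flip x)
    (N : Submodule (ZMod (2 ^ n)) (Fin 4 → ZMod (2 ^ n)))
    (hiso : ∀ x ∈ N, ∀ y ∈ N, B x y = 0)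
    (hmax : ∀ x, (∀ y ∈ N, B x y = 0) → x ∈ N) :
    2 ≤ twoRank ↥N ∧
      (¬ Submodule.torsionBy (ZMod (2 ^ n)) (Fin 4 → ZMod (2 ^ n)) 2 ≤ N →
        twoRank ↥N = 2 ∨ twoRank ↥N = 3) := by
  haveI : NeZero (2^n) := ⟨pow_ne_zero n (by norm_num)⟩
  have hcardM : Nat.card (Fin 4 → ZMod (2^n)) = 2^(n*4) := by
    rw [Nat.card_pi]
    simp [Nat.card_zmod, ← pow_mul]
  -- Step 1: the 2-torsion of N has more than 2 elements
  have hbig : ¬ (Nat.card {x : ↥N // x + x = 0} ≤ 2) := by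
    intro h2
    obtain ⟨g, hg⟩ := exists_gen n h2
    have hNle : Nat.card ↥N ≤ 2^n := by
      have hsurj : Function.Surjective (fun c : ZMod (2^n) => c • g) := by
        intro x
        obtain ⟨c, hc⟩ := hg x
        exact ⟨c, hc.symm⟩
      calc Nat.card ↥N ≤ Nat.card (ZMod (2^n)) := Nat.card_le_card_of_surjective _ hsurj
        _ = 2^n := Nat.card_zmod _
    set φ : (Fin 4 → ZMod (2^n)) →ₗ[ZMod (2^n)] ZMod (2^n) := B.flip ↑g with hφ
    have hker : LinearMap.ker φ ≤ N := by
      intro x hx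
      apply hmax
      intro y hy
      obtain ⟨c, hc⟩ := hg ⟨y, hy⟩
      have hy' : y = c • (g : Fin 4 → ZMod (2^n)) := by
        have hh := congrArg Subtype.val hc
        simpa using hh
      rw [hy', map_smul]
      have hx0 : B x ↑g = 0 := LinearMap.mem_ker.mp hx
      rw [smul_eq_mul, hx0, mul_zero]
    have hquot : Nat.card ((Fin 4 → ZMod (2^n)) ⧸ LinearMap.ker φ) ≤ 2^n := by
      rw [Nat.card_congr φ.quotKerEquivRange.toEquiv]
      calc Nat.card (LinearMap.range φ) ≤ Nat.card (ZMod (2^n)) :=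
            Nat.card_le_card_of_injective _ Subtype.val_injective
        _ = 2^n := Nat.card_zmod _
    have hkerN : Nat.card (LinearMap.ker φ) ≤ Nat.card ↥N :=
      Nat.card_le_card_of_injective _ (Submodule.inclusion_injective hker)
    have heq := Submodule.card_eq_card_quotient_mul_card (LinearMap.ker φ)
    rw [hcardM] at heq
    have hle : 2^(n*4) ≤ 2^n * 2^n := by
      rw [heq]
      exact Nat.mul_le_mul (le_trans hkerN hNle) hquot
    rw [← pow_add] at hle
    have h4 := (Nat.pow_le_pow_iff_right (by norm_num : 1 < 2)).mp hle
    omega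
  -- 2-torsion of ZMod (2^n) has exactly 2 elements
  have hZ2 : Nat.card {a : ZMod (2^n) // a + a = 0} = 2 := by
    rw [Nat.card_eq_two_iff]
    have h2n : 2^(n-1) + 2^(n-1) = 2^n := by
      rw [← two_mul, ← pow_succ']
      congr 1
      omega
    have hmem : ((2^(n-1):ℕ) : ZMod (2^n)) + ((2^(n-1):ℕ) : ZMod (2^n)) = 0 := by
      rw [← Nat.cast_add, h2n]
      exact ZMod.natCast_self _
    have hne : ((2^(n-1):ℕ) : ZMod (2^n)) ≠ 0 := by
      rw [Ne, ZMod.natCast_eq_zero_iff]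
      intro hdvd
      have h1 := Nat.le_of_dvd (by positivity) hdvd
      have h2 : 2^(n-1) < 2^n := Nat.pow_lt_pow_right (by norm_num) (by omega)
      omega
    refine ⟨⟨0, by simp⟩, ⟨((2^(n-1):ℕ) : ZMod (2^n)), hmem⟩, ?_, ?_⟩
    · intro h
      exact hne (congrArg Subtype.val h).symm
    · rw [Set.eq_univ_iff_forall]
      rintro ⟨a, ha⟩
      simp only [Set.mem_insert_iff, Set.mem_singleton_iff, Subtype.ext_iff]
      have hcast : ((a.val : ℕ) : ZMod (2^n)) = a := by rw [ZMod.natCast_val, ZMod.cast_id]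
      have hdvd : 2^n ∣ a.val + a.val := by
        rw [← ZMod.natCast_eq_zero_iff, Nat.cast_add, hcast]
        exact ha
      have hlt : a.val < 2^n := ZMod.val_lt a
      have h2n' : 2 * 2^(n-1) = 2^n := by omega
      have hdvd' : 2^(n-1) ∣ a.val := by
        have h2 : 2 * 2^(n-1) ∣ 2 * a.val := by
          rw [show 2 * a.val = a.val + a.val by ring, h2n']
          exact hdvd
        exact (mul_dvd_mul_iff_left (by norm_num : (2:ℕ) ≠ 0)).mp h2
      obtain ⟨q, hq⟩ := hdvd'
      have hpos : 0 < 2^(n-1) := by positivity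
      have hq2 : q < 2 := by
        by_contra hq2
        push_neg at hq2
        have hh : 2 * 2^(n-1) ≤ 2^(n-1) * q := by
          calc 2 * 2^(n-1) = 2^(n-1) * 2 := by ring
            _ ≤ 2^(n-1) * q := Nat.mul_le_mul_left _ hq2
        omega
      interval_cases q
      · left
        have hv : a.val = 0 := by omega
        rw [← hcast, hv, Nat.cast_zero]
      · right
        rw [← hcast, hq]
        congr 1
        omega
  -- cardinality of the 2-torsion submodule T
  set T := Submodule.torsionBy (ZMod (2^n)) (Fin 4 → ZMod (2^n)) 2 with hTdef
  have hTiff : ∀ x : Fin 4 → ZMod (2^n), x ∈ T ↔ ∀ i, x i + x i = 0 := by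
    intro x
    rw [hTdef, Submodule.mem_torsionBy_iff, two_smul, funext_iff]
    simp
  have hT16 : Nat.card ↥T = 16 := by
    have e1 : ↥T ≃ ∀ _ : Fin 4, {a : ZMod (2^n) // a + a = 0} :=
      (Equiv.subtypeEquivRight hTiff).trans (Equiv.subtypePiEquivPi
        (p := fun (_ : Fin 4) (a : ZMod (2^n)) => a + a = 0))
    rw [Nat.card_congr e1, Nat.card_pi, Finset.prod_const, hZ2, Finset.card_univ,
      Fintype.card_fin]
    norm_num
  -- the 2-torsion of N is N ⊓ T
  have e : {x : ↥N // x + x = 0} ≃ ↥(N ⊓ T) := by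
    refine ⟨fun x => ⟨x.1.1, Submodule.mem_inf.mpr ⟨x.1.2, ?_⟩⟩,
      fun y => ⟨⟨y.1, (Submodule.mem_inf.mp y.2).1⟩, ?_⟩, fun x => rfl, fun y => rfl⟩
    · rw [hTdef, Submodule.mem_torsionBy_iff, two_smul]
      have hh := congrArg Subtype.val x.2
      simpa using hh
    · apply Subtype.ext
      have hh := (Submodule.mem_inf.mp y.2).2
      simp only [hTdef, Submodule.mem_torsionBy_iff, two_smul] at hh
      simpa using hh
  have memeq : ∀ (S : Submodule (ZMod (2^n)) (Fin 4 → ZMod (2^n))),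
      Nat.card ↥S = Nat.card ↥S.toAddSubgroup :=
    fun S => Nat.card_congr (Equiv.subtypeEquivRight fun x => (S.mem_toAddSubgroup).symm)
  have hdvd16 : Nat.card {x : ↥N // x + x = 0} ∣ 16 := by
    rw [Nat.card_congr e, ← hT16, memeq (N ⊓ T), memeq T]
    apply AddSubgroup.card_dvd_of_le
    intro x hx
    rw [Submodule.mem_toAddSubgroup] at *
    exact (Submodule.mem_inf.mp hx).2
  -- extract the power of two
  obtain ⟨j, hj4, hcval⟩ := (Nat.dvd_prime_pow Nat.prime_two).mp
    ((by norm_num : (16:ℕ) = 2^4) ▸ hdvd16)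
  have hrank : twoRank ↥N = j := by
    show Nat.log 2 (Nat.card {x : ↥N // x + x = 0}) = j
    rw [hcval, Nat.log_pow (by norm_num)]
  have hj2 : 2 ≤ j := by
    by_contra h
    push_neg at h
    apply hbig
    rw [hcval]
    calc 2^j ≤ 2^1 := Nat.pow_le_pow_right (by norm_num) (by omega)
      _ = 2 := by norm_num
  constructor
  · omega
  · intro hnotle
    have hlt : Nat.card {x : ↥N // x + x = 0} < 16 := by
      obtain ⟨t, htT, htN⟩ := SetLike.not_le_iff_exists.mp hnotle
      have hc1 : Nat.card ↥(N ⊓ T) =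
          ((N ⊓ T : Submodule (ZMod (2^n)) (Fin 4 → ZMod (2^n))) :
            Set (Fin 4 → ZMod (2^n))).ncard := Nat.card_coe_set_eq _
      have hc2 : Nat.card ↥T =
          ((T : Submodule (ZMod (2^n)) (Fin 4 → ZMod (2^n))) :
            Set (Fin 4 → ZMod (2^n))).ncard := Nat.card_coe_set_eq _
      rw [Nat.card_congr e, ← hT16, hc1, hc2]
      apply Set.ncard_lt_ncard
      · constructor
        · exact fun x hx => (Submodule.mem_inf.mp hx).2
        · intro hsub
          exact htN (Submodule.mem_inf.mp (hsub htT)).1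
      · exact Set.toFinite _
    rw [hcval] at hlt
    have hj3 : j ≤ 3 := by
      by_contra h
      push_neg at h
      have h16 : (16:ℕ) = 2^4 := by norm_num
      have hge : 2^4 ≤ 2^j := Nat.pow_le_pow_right (by norm_num) (by omega)
      omega
    omega
end

section
/- Let V be a 4-dimensional ℚ₂-vector space with a symplectic form, and let ζ be a symplectic similitude of a free ℤ/2ⁿℤ-module M = (ℤ/2ⁿℤ)⁴ (with nondegenerate alternating pairing) that stabilizes every maximal isotropic subgroup of M. Then ζ is a scalar automorphism, i.e., ζ(x) = r·x for some fixed unit r ∈ (ℤ/2ⁿℤ)^× and all x ∈ M. -/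
lemma aux_dvd {m : ℕ} (x : ZMod (2^m)) (hx : ¬ IsUnit x) : ∃ y, x = 2 * y := by
  have hne : NeZero (2^m) := ⟨by positivity⟩
  by_contra h
  push_neg at h
  have h2 : ¬ (2 ∣ x.val) := by
    rintro ⟨c, hc⟩
    refine h ↑c ?_
    have : ((x.val : ℕ) : ZMod (2^m)) = ((2 * c : ℕ) : ZMod (2^m)) := by rw [hc]
    rw [ZMod.natCast_val, ZMod.cast_id] at this
    rw [this]; push_cast; ring
  have hcop : Nat.Coprime x.val (2^m) :=
    Nat.Coprime.pow_right _ ((Nat.prime_two.coprime_iff_not_dvd).mpr h2).symm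
  exact hx (by rw [← ZMod.cast_id _ x, ← ZMod.natCast_val]; exact (ZMod.isUnit_iff_coprime _ _).mpr hcop)

lemma aux_pow_mul {m : ℕ} (hm : 1 ≤ m) : (2 : ZMod (2^m))^(m-1) * 2 = 0 := by
  have h : (2 : ZMod (2^m))^(m-1) * 2 = (2:ZMod (2^m))^m := by
    rw [← pow_succ]; congr 1; omega
  rw [h]
  have h2 : ((2^m : ℕ) : ZMod (2^m)) = 0 := ZMod.natCast_self _
  push_cast at h2
  exact h2

lemma aux_pow_ne {m : ℕ} (hm : 1 ≤ m) : (2 : ZMod (2^m))^(m-1) ≠ 0 := by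
  intro h
  have h2 : ((2^(m-1) : ℕ) : ZMod (2^m)) = 0 := by push_cast; exact h
  rw [ZMod.natCast_eq_zero_iff] at h2
  have := (Nat.pow_dvd_pow_iff_le_right (by norm_num : 1 < 2)).mp h2
  omega

lemma fin4_aux : ∀ i j : Fin 4, i ≠ j → ∃ k l : Fin 4, k ≠ l ∧ k ≠ i ∧ k ≠ j ∧ l ≠ i ∧ l ≠ j := by decide

lemma fin4_cover : ∀ i j k l : Fin 4, i ≠ j → k ≠ l → k ≠ i → k ≠ j → l ≠ i → l ≠ j →
    ∀ m : Fin 4, m = i ∨ m = j ∨ m = k ∨ m = l := by decide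

lemma symp_basis (n : ℕ) (hn : 1 ≤ n)
    (B : (Fin 4 → ZMod (2 ^ n)) →ₗ[ZMod (2 ^ n)] (Fin 4 → ZMod (2 ^ n))
      →ₗ[ZMod (2 ^ n)] ZMod (2 ^ n))
    (halt : ∀ x, B x x = 0)
    (hnd : Function.Bijective fun x => B.flip x) :
    ∃ e1 f1 e2 f2 : Fin 4 → ZMod (2 ^ n),
      B e1 f1 = 1 ∧ B e2 f2 = 1 ∧ B e1 e2 = 0 ∧ B e1 f2 = 0 ∧ B f1 e2 = 0 ∧ B f1 f2 = 0 ∧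
      (∀ x, ∃ a b c d : ZMod (2^n), x = a • e1 + b • f1 + c • e2 + d • f2) := by
  set R := ZMod (2 ^ n)
  have hskew : ∀ x y, B y x = - B x y := by
    intro x y
    have h := halt (x + y)
    simp only [map_add, LinearMap.add_apply, halt] at h
    linear_combination h
  have hinj : ∀ x, (∀ y, B y x = 0) → x = 0 := by
    intro x hx
    have : B.flip x = B.flip 0 := by
      ext y
      simp only [LinearMap.flip_apply, map_zero, LinearMap.zero_apply]
      exact hx _
    exact hnd.injective this
  set E : Fin 4 → (Fin 4 → R) := fun a => Pi.single a 1 with hE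
  have hsingle : ∀ (a : Fin 4) (c : R), Pi.single a c = c • E a := by
    intro a c; funext b
    by_cases h : b = a <;> simp [hE, Pi.single_apply, h]
  have hsum : ∀ x : Fin 4 → R, x = ∑ a, x a • E a := by
    intro x
    conv_lhs => rw [← Finset.univ_sum_single x]
    exact Finset.sum_congr rfl fun a _ => hsingle a (x a)
  -- Step A: some Gram entry is a unit
  have hA : ∃ i j, IsUnit (B (E i) (E j)) := by
    by_contra hA
    push_neg at hA
    have hx0 : ∀ y, B y ((2:R)^(n-1) • E 0) = 0 := by
      intro y
      rw [map_smul, smul_eq_mul]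
      have : B y (E 0) = ∑ a, y a * B (E a) (E 0) := by
        conv_lhs => rw [hsum y]
        simp [map_sum, LinearMap.sum_apply, smul_eq_mul]
      rw [this, Finset.mul_sum]
      refine Finset.sum_eq_zero fun a _ => ?_
      obtain ⟨z, hz⟩ := aux_dvd _ (hA a 0)
      rw [hz]
      calc (2:R)^(n-1) * (y a * (2 * z)) = y a * z * ((2:R)^(n-1) * 2) := by ring
        _ = 0 := by rw [aux_pow_mul hn, mul_zero]
    have := hinj _ hx0
    have h0 : ((2:R)^(n-1) • E 0) 0 = 0 := by rw [this]; rfl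
    simp [hE, Pi.smul_apply] at h0
    exact aux_pow_ne hn h0
  obtain ⟨i, j, hu⟩ := hA
  haveI : Fact (1 < 2 ^ n) := ⟨by have : 2^1 ≤ 2^n := Nat.pow_le_pow_right (by norm_num) hn; omega⟩
  have hij : i ≠ j := by
    rintro rfl
    rw [halt] at hu
    exact hu.ne_zero rfl
  obtain ⟨k, l, hkl, hki, hkj, hli, hlj⟩ := fin4_aux i j hij
  set u := hu.unit with hudef
  set e1 : Fin 4 → R := E i with he1
  set f1 : Fin 4 → R := (↑u⁻¹ : R) • E j with hf1
  have hBe1f1 : B e1 f1 = 1 := by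
    rw [hf1, map_smul, smul_eq_mul]
    have : B e1 (E j) = ↑u := hu.unit_spec.symm
    rw [this, Units.inv_mul]
  have hBf1e1 : B f1 e1 = -1 := by rw [hskew, hBe1f1]
  -- projection to the orthogonal complement of span(e1,f1)
  set e2' : Fin 4 → R := E k - (B (E k) f1) • e1 + (B (E k) e1) • f1 with he2'
  set f2' : Fin 4 → R := E l - (B (E l) f1) • e1 + (B (E l) e1) • f1 with hf2'
  have hπe1 : ∀ v : Fin 4 → R,
      B (v - (B v f1) • e1 + (B v e1) • f1) e1 = 0 := by
    intro v
    simp only [map_add, map_sub, map_smul, LinearMap.add_apply, LinearMap.sub_apply,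
      LinearMap.smul_apply, smul_eq_mul, halt, hBf1e1]
    ring
  have hπf1 : ∀ v : Fin 4 → R,
      B (v - (B v f1) • e1 + (B v e1) • f1) f1 = 0 := by
    intro v
    simp only [map_add, map_sub, map_smul, LinearMap.add_apply, LinearMap.sub_apply,
      LinearMap.smul_apply, smul_eq_mul, halt, hBe1f1]
    ring
  have he2'e1 : B e2' e1 = 0 := hπe1 _
  have he2'f1 : B e2' f1 = 0 := hπf1 _
  have hf2'e1 : B f2' e1 = 0 := hπe1 _
  have hf2'f1 : B f2' f1 = 0 := hπf1 _
  -- expressing the standard basis vectors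
  have hx4 : ∀ x : Fin 4 → R, x = x i • E i + x j • E j + x k • E k + x l • E l := by
    intro x
    funext m
    have hm := fin4_cover i j k l hij hkl hki hkj hli hlj m
    simp only [Pi.add_apply, Pi.smul_apply, smul_eq_mul, hE, Pi.single_apply]
    rcases hm with rfl | rfl | rfl | rfl <;>
      simp [hij, hkl, hki, hkj, hli, hlj, Ne.symm hij, Ne.symm hkl, Ne.symm hki,
        Ne.symm hkj, Ne.symm hli, Ne.symm hlj]
  have hEj : E j = (↑u : R) • f1 := by
    rw [hf1, smul_smul, Units.mul_inv, one_smul]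
  have hEk : E k = e2' + (B (E k) f1) • e1 - (B (E k) e1) • f1 := by
    rw [he2']; module
  have hEl : E l = f2' + (B (E l) f1) • e1 - (B (E l) e1) • f1 := by
    rw [hf2']; module
  have hspan' : ∀ x : Fin 4 → R, ∃ a b c d : R,
      x = a • e1 + b • f1 + c • e2' + d • f2' := by
    intro x
    refine ⟨x i + x k * B (E k) f1 + x l * B (E l) f1,
      x j * ↑u - x k * B (E k) e1 - x l * B (E l) e1, x k, x l, ?_⟩
    conv_lhs => rw [hx4 x, hEj, hEk, hEl, ← he1]
    module
  -- Step D : B e2' f2' is a unit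
  have ht : IsUnit (B e2' f2') := by
    by_contra ht
    obtain ⟨s, hs⟩ := aux_dvd _ ht
    have hx0 : ∀ y, B y ((2:R)^(n-1) • e2') = 0 := by
      intro y
      obtain ⟨a, b, c, d, hy⟩ := hspan' y
      rw [map_smul, smul_eq_mul, hy]
      simp only [map_add, map_smul, LinearMap.add_apply, LinearMap.smul_apply, smul_eq_mul]
      rw [hskew e2' e1, he2'e1, hskew e2' f1, he2'f1, halt, hskew e2' f2', hs]
      linear_combination (-(d*s)) * aux_pow_mul hn
    have h0 := hinj _ hx0
    have hc : ((2:R)^(n-1) • e2') k = 0 := by rw [h0]; rfl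
    have he2k : e2' k = 1 := by
      simp only [he2', Pi.add_apply, Pi.sub_apply, Pi.smul_apply, smul_eq_mul, he1, hf1,
        hE, Pi.single_apply]
      simp [hki, hkj, Ne.symm hki, Ne.symm hkj, hkl]
    rw [Pi.smul_apply, he2k, smul_eq_mul, mul_one] at hc
    exact aux_pow_ne hn hc
  set t := ht.unit with htdef
  refine ⟨e1, f1, e2', (↑t⁻¹ : R) • f2', hBe1f1, ?_, ?_, ?_, ?_, ?_, ?_⟩
  · rw [map_smul, smul_eq_mul]
    have : B e2' f2' = ↑t := ht.unit_spec.symm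
    rw [this, Units.inv_mul]
  · rw [hskew, he2'e1, neg_zero]
  · rw [map_smul, hskew, hf2'e1, neg_zero, smul_zero]
  · rw [hskew, he2'f1, neg_zero]
  · rw [map_smul, hskew, hf2'f1, neg_zero, smul_zero]
  · intro x
    obtain ⟨a, b, c, d, hx⟩ := hspan' x
    refine ⟨a, b, c, d * ↑t, hx.trans ?_⟩
    have : f2' = (↑t : R) • ((↑t⁻¹ : R) • f2') := by
      rw [smul_smul, Units.mul_inv, one_smul]
    conv_lhs => rw [this]
    module

/-- A symplectic similitude `ζ` of `M = (ℤ/2ⁿℤ)⁴` (with a nondegenerate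
alternating pairing) stabilizing every maximal isotropic subgroup of `M` is a
scalar automorphism: `ζ x = r • x` for a fixed unit `r` and all `x`. -/
theorem stmt_14 (n : ℕ) (hn : 1 ≤ n)
    (B : (Fin 4 → ZMod (2 ^ n)) →ₗ[ZMod (2 ^ n)] (Fin 4 → ZMod (2 ^ n))
      →ₗ[ZMod (2 ^ n)] ZMod (2 ^ n))
    (halt : ∀ x, B x x = 0)
    (hnd : Function.Bijective fun x => B.flip x)
    (ζ : (Fin 4 → ZMod (2 ^ n)) ≃ₗ[ZMod (2 ^ n)] (Fin 4 → ZMod (2 ^ n)))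
    (hsim : ∃ c : (ZMod (2 ^ n))ˣ, ∀ x y, B (ζ x) (ζ y) = (c : ZMod (2 ^ n)) * B x y)
    (hstab : ∀ N : Submodule (ZMod (2 ^ n)) (Fin 4 → ZMod (2 ^ n)),
      ((∀ x ∈ N, ∀ y ∈ N, B x y = 0) ∧ ∀ x, (∀ y ∈ N, B x y = 0) → x ∈ N) →
        Submodule.map (ζ : (Fin 4 → ZMod (2 ^ n)) →ₗ[ZMod (2 ^ n)]
          (Fin 4 → ZMod (2 ^ n))) N = N) :
    ∃ r : (ZMod (2 ^ n))ˣ, ∀ x, ζ x = (r : ZMod (2 ^ n)) • x := by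
  classical
  set R := ZMod (2 ^ n)
  have hskew : ∀ x y, B y x = - B x y := by
    intro x y
    have h := halt (x + y)
    simp only [map_add, LinearMap.add_apply, halt] at h
    linear_combination h
  obtain ⟨e1, f1, e2, f2, he1f1, he2f2, he1e2, he1f2, hf1e2, hf1f2, hspan⟩ :=
    symp_basis n hn B halt hnd
  have hf1e1 : B f1 e1 = -1 := by rw [hskew, he1f1]
  have hf2e2 : B f2 e2 = -1 := by rw [hskew, he2f2]
  have he2e1 : B e2 e1 = 0 := by rw [hskew, he1e2, neg_zero]
  have hf2e1 : B f2 e1 = 0 := by rw [hskew, he1f2, neg_zero]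
  have he2f1 : B e2 f1 = 0 := by rw [hskew, hf1e2, neg_zero]
  have hf2f1 : B f2 f1 = 0 := by rw [hskew, hf1f2, neg_zero]
  -- pairing a general combination against a vector
  have hBcomb : ∀ (a b c d : R) (y : Fin 4 → R),
      B (a • e1 + b • f1 + c • e2 + d • f2) y
        = a * B e1 y + b * B f1 y + c * B e2 y + d * B f2 y := by
    intro a b c d y
    simp [map_add, map_smul, LinearMap.add_apply, LinearMap.smul_apply, smul_eq_mul]
  have hXe1 : ∀ a b c d : R, B (a • e1 + b • f1 + c • e2 + d • f2) e1 = -b := by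
    intro a b c d; rw [hBcomb, halt, hf1e1, he2e1, hf2e1]; ring
  have hXf1 : ∀ a b c d : R, B (a • e1 + b • f1 + c • e2 + d • f2) f1 = a := by
    intro a b c d; rw [hBcomb, halt, he1f1, he2f1, hf2f1]; ring
  have hXe2 : ∀ a b c d : R, B (a • e1 + b • f1 + c • e2 + d • f2) e2 = -d := by
    intro a b c d; rw [hBcomb, halt, he1e2, hf1e2, hf2e2]; ring
  have hXf2 : ∀ a b c d : R, B (a • e1 + b • f1 + c • e2 + d • f2) f2 = c := by
    intro a b c d; rw [hBcomb, halt, he1f2, hf1f2, he2f2]; ring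
  -- uniqueness of coefficients
  have hcoords : ∀ a b c d : R, a • e1 + b • f1 + c • e2 + d • f2 = 0 →
      a = 0 ∧ b = 0 ∧ c = 0 ∧ d = 0 := by
    intro a b c d h
    have ha := hXf1 a b c d
    have hb := hXe1 a b c d
    have hc := hXf2 a b c d
    have hd := hXe2 a b c d
    rw [h] at ha hb hc hd
    simp only [map_zero, LinearMap.zero_apply] at ha hb hc hd
    exact ⟨by linear_combination -ha, by linear_combination hb,
      by linear_combination -hc, by linear_combination hd⟩
  have huniq : ∀ a b c d a' b' c' d' : R,
      a • e1 + b • f1 + c • e2 + d • f2 = a' • e1 + b' • f1 + c' • e2 + d' • f2 →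
      a = a' ∧ b = b' ∧ c = c' ∧ d = d' := by
    intro a b c d a' b' c' d' h
    have h0 : (a - a') • e1 + (b - b') • f1 + (c - c') • e2 + (d - d') • f2 = 0 := by
      have h1 : (a - a') • e1 + (b - b') • f1 + (c - c') • e2 + (d - d') • f2
          = (a • e1 + b • f1 + c • e2 + d • f2)
            - (a' • e1 + b' • f1 + c' • e2 + d' • f2) := by module
      rw [h1, h, sub_self]
    obtain ⟨h1, h2, h3, h4⟩ := hcoords _ _ _ _ h0
    exact ⟨by linear_combination h1, by linear_combination h2,
      by linear_combination h3, by linear_combination h4⟩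
  -- isotropy of a span of two orthogonal vectors
  have hiso : ∀ v w : Fin 4 → R, B v w = 0 →
      ∀ x ∈ Submodule.span R {v, w}, ∀ y ∈ Submodule.span R {v, w}, B x y = 0 := by
    intro v w hvw x hx y hy
    have hwv : B w v = 0 := by rw [hskew, hvw, neg_zero]
    obtain ⟨a, b, rfl⟩ := Submodule.mem_span_pair.mp hx
    obtain ⟨a', b', rfl⟩ := Submodule.mem_span_pair.mp hy
    simp only [map_add, map_smul, LinearMap.add_apply, LinearMap.smul_apply, smul_eq_mul,
      halt, hvw, hwv]
    ring
  have memv : ∀ v w : Fin 4 → R, v ∈ Submodule.span R {v, w} :=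
    fun v w => Submodule.mem_span_pair.mpr ⟨1, 0, by module⟩
  have memw : ∀ v w : Fin 4 → R, w ∈ Submodule.span R {v, w} :=
    fun v w => Submodule.mem_span_pair.mpr ⟨0, 1, by module⟩
  have hζmem : ∀ N : Submodule R (Fin 4 → R),
      ((∀ x ∈ N, ∀ y ∈ N, B x y = 0) ∧ ∀ x, (∀ y ∈ N, B x y = 0) → x ∈ N) →
      ∀ v ∈ N, ζ v ∈ N := by
    intro N hN v hv
    have h := hstab N hN
    have h2 : ζ v ∈ Submodule.map (ζ : (Fin 4 → R) →ₗ[R] (Fin 4 → R)) N :=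
      Submodule.mem_map_of_mem hv
    rwa [h] at h2
  -- the six maximal isotropic planes
  have hN1 : ∀ v ∈ Submodule.span R {e1, e2}, ζ v ∈ Submodule.span R {e1, e2} := by
    refine hζmem _ ⟨hiso _ _ he1e2, ?_⟩
    intro x hx
    obtain ⟨a, b, c, d, rfl⟩ := hspan x
    have h1 := hx e1 (memv _ _); have h2 := hx e2 (memw _ _)
    rw [hXe1] at h1; rw [hXe2] at h2
    refine Submodule.mem_span_pair.mpr ⟨a, c, ?_⟩
    rw [show b = 0 from by linear_combination -h1, show d = 0 from by linear_combination -h2]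
    module
  have hN2 : ∀ v ∈ Submodule.span R {e1, f2}, ζ v ∈ Submodule.span R {e1, f2} := by
    refine hζmem _ ⟨hiso _ _ he1f2, ?_⟩
    intro x hx
    obtain ⟨a, b, c, d, rfl⟩ := hspan x
    have h1 := hx e1 (memv _ _); have h2 := hx f2 (memw _ _)
    rw [hXe1] at h1; rw [hXf2] at h2
    refine Submodule.mem_span_pair.mpr ⟨a, d, ?_⟩
    rw [show b = 0 from by linear_combination -h1, h2]
    module
  have hN3 : ∀ v ∈ Submodule.span R {f1, e2}, ζ v ∈ Submodule.span R {f1, e2} := by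
    refine hζmem _ ⟨hiso _ _ hf1e2, ?_⟩
    intro x hx
    obtain ⟨a, b, c, d, rfl⟩ := hspan x
    have h1 := hx f1 (memv _ _); have h2 := hx e2 (memw _ _)
    rw [hXf1] at h1; rw [hXe2] at h2
    refine Submodule.mem_span_pair.mpr ⟨b, c, ?_⟩
    rw [h1, show d = 0 from by linear_combination -h2]
    module
  have hN4 : ∀ v ∈ Submodule.span R {f1, f2}, ζ v ∈ Submodule.span R {f1, f2} := by
    refine hζmem _ ⟨hiso _ _ hf1f2, ?_⟩
    intro x hx
    obtain ⟨a, b, c, d, rfl⟩ := hspan x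
    have h1 := hx f1 (memv _ _); have h2 := hx f2 (memw _ _)
    rw [hXf1] at h1; rw [hXf2] at h2
    refine Submodule.mem_span_pair.mpr ⟨b, d, ?_⟩
    rw [h1, h2]
    module
  have hv5 : B (e1 + e2) (f1 - f2) = 0 := by
    simp only [map_add, map_sub, LinearMap.add_apply, LinearMap.sub_apply,
      he1f1, he1f2, he2f1, he2f2]; ring
  have hv6 : B (e1 + f2) (e2 + f1) = 0 := by
    simp only [map_add, LinearMap.add_apply, he1e2, he1f1, hf2e2, hf2f1]; ring
  have hN5 : ∀ v ∈ Submodule.span R {e1 + e2, f1 - f2},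
      ζ v ∈ Submodule.span R {e1 + e2, f1 - f2} := by
    refine hζmem _ ⟨hiso _ _ hv5, ?_⟩
    intro x hx
    obtain ⟨a, b, c, d, rfl⟩ := hspan x
    have h1 := hx (e1 + e2) (memv _ _); have h2 := hx (f1 - f2) (memw _ _)
    rw [map_add, hXe1, hXe2] at h1; rw [map_sub, hXf1, hXf2] at h2
    refine Submodule.mem_span_pair.mpr ⟨a, b, ?_⟩
    rw [show c = a from by linear_combination -h2, show d = -b from by linear_combination -h1]
    module
  have hN6 : ∀ v ∈ Submodule.span R {e1 + f2, e2 + f1},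
      ζ v ∈ Submodule.span R {e1 + f2, e2 + f1} := by
    refine hζmem _ ⟨hiso _ _ hv6, ?_⟩
    intro x hx
    obtain ⟨a, b, c, d, rfl⟩ := hspan x
    have h1 := hx (e1 + f2) (memv _ _); have h2 := hx (e2 + f1) (memw _ _)
    rw [map_add, hXe1, hXf2] at h1; rw [map_add, hXe2, hXf1] at h2
    refine Submodule.mem_span_pair.mpr ⟨a, b, ?_⟩
    rw [show c = b from by linear_combination h1, show d = a from by linear_combination -h2]
    module
  -- scalars
  obtain ⟨p1, q1, hpq1⟩ := Submodule.mem_span_pair.mp (hN1 e1 (memv _ _))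
  obtain ⟨p2, q2, hpq2⟩ := Submodule.mem_span_pair.mp (hN2 e1 (memv _ _))
  obtain ⟨r1, hr1⟩ : ∃ r : R, ζ e1 = r • e1 := by
    have key : p1 • e1 + (0:R) • f1 + q1 • e2 + (0:R) • f2
        = p2 • e1 + (0:R) • f1 + (0:R) • e2 + q2 • f2 := by
      have h := hpq1.trans hpq2.symm
      linear_combination (norm := module) h
    obtain ⟨h1, -, h3, -⟩ := huniq _ _ _ _ _ _ _ _ key
    refine ⟨p1, ?_⟩
    rw [← hpq1, h3]; module
  obtain ⟨p3, q3, hpq3⟩ := Submodule.mem_span_pair.mp (hN3 f1 (memv _ _))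
  obtain ⟨p4, q4, hpq4⟩ := Submodule.mem_span_pair.mp (hN4 f1 (memv _ _))
  obtain ⟨r2, hr2⟩ : ∃ r : R, ζ f1 = r • f1 := by
    have key : (0:R) • e1 + p3 • f1 + q3 • e2 + (0:R) • f2
        = (0:R) • e1 + p4 • f1 + (0:R) • e2 + q4 • f2 := by
      have h := hpq3.trans hpq4.symm
      linear_combination (norm := module) h
    obtain ⟨-, h2, h3, -⟩ := huniq _ _ _ _ _ _ _ _ key
    refine ⟨p3, ?_⟩
    rw [← hpq3, h3]; module
  obtain ⟨p5, q5, hpq5⟩ := Submodule.mem_span_pair.mp (hN1 e2 (memw _ _))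
  obtain ⟨p6, q6, hpq6⟩ := Submodule.mem_span_pair.mp (hN3 e2 (memw _ _))
  obtain ⟨r3, hr3⟩ : ∃ r : R, ζ e2 = r • e2 := by
    have key : p5 • e1 + (0:R) • f1 + q5 • e2 + (0:R) • f2
        = (0:R) • e1 + p6 • f1 + q6 • e2 + (0:R) • f2 := by
      have h := hpq5.trans hpq6.symm
      linear_combination (norm := module) h
    obtain ⟨h1, -, -, -⟩ := huniq _ _ _ _ _ _ _ _ key
    refine ⟨q5, ?_⟩
    rw [← hpq5, h1]; module
  obtain ⟨p7, q7, hpq7⟩ := Submodule.mem_span_pair.mp (hN2 f2 (memw _ _))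
  obtain ⟨p8, q8, hpq8⟩ := Submodule.mem_span_pair.mp (hN4 f2 (memw _ _))
  obtain ⟨r4, hr4⟩ : ∃ r : R, ζ f2 = r • f2 := by
    have key : p7 • e1 + (0:R) • f1 + (0:R) • e2 + q7 • f2
        = (0:R) • e1 + p8 • f1 + (0:R) • e2 + q8 • f2 := by
      have h := hpq7.trans hpq8.symm
      linear_combination (norm := module) h
    obtain ⟨h1, -, -, -⟩ := huniq _ _ _ _ _ _ _ _ key
    refine ⟨q7, ?_⟩
    rw [← hpq7, h1]; module
  -- the three sums force the scalars to agree
  have hsum1 : r1 = r3 := by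
    obtain ⟨p, q, hpq⟩ := Submodule.mem_span_pair.mp
      (hN5 (e1 + e2) (memv _ _))
    have hζ : ζ (e1 + e2) = r1 • e1 + r3 • e2 := by rw [map_add, hr1, hr3]
    have key : r1 • e1 + (0:R) • f1 + r3 • e2 + (0:R) • f2
        = p • e1 + q • f1 + p • e2 + (-q) • f2 := by
      have h := hζ.symm.trans hpq.symm
      linear_combination (norm := module) h
    obtain ⟨h1, -, h3, -⟩ := huniq _ _ _ _ _ _ _ _ key
    rw [h1, h3]
  have hsum2 : r1 = r4 := by
    obtain ⟨p, q, hpq⟩ := Submodule.mem_span_pair.mp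
      (hN6 (e1 + f2) (memv _ _))
    have hζ : ζ (e1 + f2) = r1 • e1 + r4 • f2 := by rw [map_add, hr1, hr4]
    have key : r1 • e1 + (0:R) • f1 + (0:R) • e2 + r4 • f2
        = p • e1 + q • f1 + q • e2 + p • f2 := by
      have h := hζ.symm.trans hpq.symm
      linear_combination (norm := module) h
    obtain ⟨h1, -, -, h4⟩ := huniq _ _ _ _ _ _ _ _ key
    rw [h1, h4]
  have hsum3 : r2 = r3 := by
    obtain ⟨p, q, hpq⟩ := Submodule.mem_span_pair.mp
      (hN6 (e2 + f1) (memw _ _))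
    have hζ : ζ (e2 + f1) = r3 • e2 + r2 • f1 := by rw [map_add, hr3, hr2]
    have key : (0:R) • e1 + r2 • f1 + r3 • e2 + (0:R) • f2
        = p • e1 + q • f1 + q • e2 + p • f2 := by
      have h := hζ.symm.trans hpq.symm
      linear_combination (norm := module) h
    obtain ⟨-, h2, h3, -⟩ := huniq _ _ _ _ _ _ _ _ key
    rw [h2, h3]
  -- r1 is a unit
  obtain ⟨cu, hc⟩ := hsim
  have hunit : IsUnit r1 := by
    have h := hc e1 f1
    rw [hr1, hr2] at h
    simp only [map_smul, LinearMap.smul_apply, smul_eq_mul, he1f1] at h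
    rw [hsum3.trans hsum1.symm] at h
    have h2 : r1 * r1 = (cu : R) := by linear_combination h
    exact isUnit_of_mul_isUnit_left (h2 ▸ cu.isUnit)
  refine ⟨hunit.unit, fun x => ?_⟩
  obtain ⟨a, b, c, d, rfl⟩ := hspan x
  rw [IsUnit.unit_spec]
  rw [map_add, map_add, map_add, map_smul, map_smul, map_smul, map_smul,
    hr1, hr2, hr3, hr4, ← hsum1, ← hsum2, ← hsum3.trans hsum1.symm]
  module
end
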